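/- arXiv:2102.06446 — 2 statements merged into one kernel-verified Lean document; each statement's English description precedes it below -/
import Mathlib

section
/- For any configuration ω of open edges in Z^2 whose open edges form a single nonempty finite connected component with N open edges, the number ∂N of closed edges sharing at least one vertex with an open edge satisfies ∂N ≤ 2·N + 4. -/
/-- A nearest-neighbour edge of `ℤ²`: an unordered pair of vertices at `L¹`-distance 1. -/
def IsNNEdge2 (e : Sym2 (ℤ × ℤ)) : Prop :=
  ∃ x y : ℤ × ℤ, e = s(x, y) ∧ |x.1 - y.1| + |x.2 - y.2| = 1

/-- Two edges touch if they share a vertex. -/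
def Touches2 (e f : Sym2 (ℤ × ℤ)) : Prop :=
  ∃ v : ℤ × ℤ, v ∈ e ∧ v ∈ f

/-- A finite set of edges is connected if any two of its edges are linked by a chain of
edges of the set, consecutive ones sharing a vertex. -/
def EdgeConnected2 (E : Finset (Sym2 (ℤ × ℤ))) : Prop :=
  ∀ e ∈ E, ∀ f ∈ E,
    Relation.ReflTransGen (fun a b => a ∈ E ∧ b ∈ E ∧ Touches2 a b) e f

/-- The two endpoints of an edge, as a `Finset`. -/
noncomputable def verts (e : Sym2 (ℤ × ℤ)) : Finset (ℤ × ℤ) :=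
  Sym2.lift ⟨fun a b => {a, b}, fun a b => Finset.pair_comm a b⟩ e

@[simp] lemma mem_verts {v : ℤ × ℤ} {e : Sym2 (ℤ × ℤ)} : v ∈ verts e ↔ v ∈ e := by
  induction e using Sym2.inductionOn with
  | hf x y => simp [verts, Sym2.mem_iff]

lemma card_verts_le (e : Sym2 (ℤ × ℤ)) : (verts e).card ≤ 2 := by
  induction e using Sym2.inductionOn with
  | hf x y =>
    simp only [verts, Sym2.lift_mk]
    exact le_trans (Finset.card_insert_le _ _) (by simp)

/-- The vertex set of a set of edges. -/
noncomputable def VS (E : Finset (Sym2 (ℤ × ℤ))) : Finset (ℤ × ℤ) := E.biUnion verts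

/-- The four nearest-neighbour edges incident to a vertex. -/
noncomputable def incEdges (v : ℤ × ℤ) : Finset (Sym2 (ℤ × ℤ)) :=
  {s(v, v + (1,0)), s(v, v + (-1,0)), s(v, v + (0,1)), s(v, v + (0,-1))}

lemma card_incEdges_le (v : ℤ × ℤ) : (incEdges v).card ≤ 4 := by
  refine le_trans (Finset.card_insert_le _ _) ?_
  refine Nat.succ_le_succ ?_
  refine le_trans (Finset.card_insert_le _ _) ?_
  refine Nat.succ_le_succ ?_
  refine le_trans (Finset.card_insert_le _ _) ?_
  simp

lemma smem_incEdges {v y : ℤ × ℤ} (h : |v.1 - y.1| + |v.2 - y.2| = 1) :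
    s(v, y) ∈ incEdges v := by
  have h4 : (y.1 = v.1 + 1 ∧ y.2 = v.2) ∨ (y.1 = v.1 - 1 ∧ y.2 = v.2) ∨
      (y.2 = v.2 + 1 ∧ y.1 = v.1) ∨ (y.2 = v.2 - 1 ∧ y.1 = v.1) := by
    rcases abs_cases (v.1 - y.1) with ⟨e1, _⟩ | ⟨e1, _⟩ <;>
      rcases abs_cases (v.2 - y.2) with ⟨e2, _⟩ | ⟨e2, _⟩ <;> omega
  rcases h4 with ⟨h1, h2⟩ | ⟨h1, h2⟩ | ⟨h1, h2⟩ | ⟨h1, h2⟩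
  · have : y = v + (1,0) := by ext <;> simpa
    rw [this]; simp [incEdges]
  · have : y = v + (-1,0) := by ext <;> simp <;> omega
    rw [this]; simp [incEdges]
  · have : y = v + (0,1) := by ext <;> simp <;> omega
    rw [this]; simp [incEdges]
  · have : y = v + (0,-1) := by ext <;> simp <;> omega
    rw [this]; simp [incEdges]

lemma mem_incEdges {v : ℤ × ℤ} {e : Sym2 (ℤ × ℤ)}
    (hNN : IsNNEdge2 e) (hv : v ∈ e) : e ∈ incEdges v := by
  obtain ⟨x, y, rfl, hd⟩ := hNN
  rcases Sym2.mem_iff.mp hv with rfl | rfl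
  · exact smem_incEdges hd
  · rw [Sym2.eq_swap]
    exact smem_incEdges (by rw [abs_sub_comm v.1 x.1, abs_sub_comm v.2 x.2]; exact hd)

/-- `n`-step reachability for a relation. -/
def ReachN {α : Type*} (r : α → α → Prop) : ℕ → α → α → Prop
  | 0 => Eq
  | n+1 => fun a b => ∃ c, ReachN r n a c ∧ r c b

lemma reflTransGen_exists_reachN {α : Type*} {r : α → α → Prop} {a b : α}
    (h : Relation.ReflTransGen r a b) : ∃ n, ReachN r n a b := by
  induction h with
  | refl => exact ⟨0, rfl⟩
  | tail _ hr ih => obtain ⟨n, hn⟩ := ih; exact ⟨n + 1, _, hn, hr⟩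

/-- A connected nonempty edge set on `N` edges has at most `N + 1` vertices. -/
lemma vs_card_le (E : Finset (Sym2 (ℤ × ℤ))) (hne : E.Nonempty)
    (hconn : EdgeConnected2 E) :
    (VS E).card ≤ E.card + 1 := by
  classical
  obtain ⟨e₀, he₀⟩ := hne
  set r : Sym2 (ℤ × ℤ) → Sym2 (ℤ × ℤ) → Prop :=
    fun a b => a ∈ E ∧ b ∈ E ∧ Touches2 a b with hr
  set F : ℕ → Finset (Sym2 (ℤ × ℤ)) :=
    fun n => E.filter (fun f => ∃ m ≤ n, ReachN r m e₀ f) with hF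
  have hmono : ∀ n, F n ⊆ F (n + 1) := by
    intro n f hf
    rw [hF, Finset.mem_filter] at hf ⊢
    obtain ⟨hfE, m, hm, hre⟩ := hf
    exact ⟨hfE, m, by omega, hre⟩
  have key : ∀ n, (VS (F n)).card ≤ (F n).card + 1 := by
    intro n
    induction n with
    | zero =>
      have hF0 : F 0 = {e₀} := by
        ext f
        simp only [hF, Finset.mem_filter, Finset.mem_singleton]
        constructor
        · rintro ⟨_, m, hm, hre⟩
          interval_cases m
          exact hre.symm
        · rintro rfl
          exact ⟨he₀, 0, le_refl _, rfl⟩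
      rw [hF0]
      calc (VS {e₀}).card ≤ (verts e₀).card := by
            apply Finset.card_le_card; intro v hv
            simp only [VS, Finset.mem_biUnion, Finset.mem_singleton] at hv
            obtain ⟨e, rfl, hv⟩ := hv; exact hv
        _ ≤ 2 := card_verts_le e₀
        _ = ({e₀} : Finset (Sym2 (ℤ × ℤ))).card + 1 := by simp
    | succ n ih =>
      set D := F (n + 1) \ F n with hD
      have hnew : ∀ g ∈ D, (verts g \ VS (F n)).card ≤ 1 := by
        intro g hg
        rw [hD, Finset.mem_sdiff] at hg
        obtain ⟨hg1, hg2⟩ := hg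
        rw [hF, Finset.mem_filter] at hg1
        obtain ⟨hgE, m, hm, hre⟩ := hg1
        have hm1 : m = n + 1 := by
          by_contra hc
          apply hg2
          rw [hF, Finset.mem_filter]
          exact ⟨hgE, m, by omega, hre⟩
        subst hm1
        obtain ⟨c, hcre, hcE, hgE', v, hvc, hvg⟩ := hre
        have hcF : c ∈ F n := by
          rw [hF, Finset.mem_filter]; exact ⟨hcE, n, le_refl _, hcre⟩
        have hvV : v ∈ VS (F n) := by
          simp only [VS, Finset.mem_biUnion]; exact ⟨c, hcF, mem_verts.mpr hvc⟩
        have hsub : verts g \ VS (F n) ⊆ (verts g).erase v := by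
          intro w hw
          rw [Finset.mem_sdiff] at hw
          refine Finset.mem_erase.mpr ⟨?_, hw.1⟩
          rintro rfl; exact hw.2 hvV
        calc (verts g \ VS (F n)).card ≤ ((verts g).erase v).card :=
              Finset.card_le_card hsub
          _ = (verts g).card - 1 := Finset.card_erase_of_mem (mem_verts.mpr hvg)
          _ ≤ 1 := by have := card_verts_le g; omega
      have hsub : VS (F (n + 1)) ⊆ VS (F n) ∪ D.biUnion (fun g => verts g \ VS (F n)) := by
        intro v hv
        simp only [VS, Finset.mem_biUnion] at hv
        obtain ⟨g, hg, hvg⟩ := hv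
        by_cases hgF : g ∈ F n
        · exact Finset.mem_union_left _
            (by simp only [VS, Finset.mem_biUnion]; exact ⟨g, hgF, hvg⟩)
        · by_cases hvV : v ∈ VS (F n)
          · exact Finset.mem_union_left _ hvV
          · refine Finset.mem_union_right _ ?_
            rw [Finset.mem_biUnion]
            exact ⟨g, by rw [hD, Finset.mem_sdiff]; exact ⟨hg, hgF⟩,
              Finset.mem_sdiff.mpr ⟨hvg, hvV⟩⟩
      have hcard : (VS (F (n+1))).card ≤ (VS (F n)).card + D.card := by
        calc (VS (F (n+1))).card
            ≤ (VS (F n) ∪ D.biUnion (fun g => verts g \ VS (F n))).card :=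
              Finset.card_le_card hsub
          _ ≤ (VS (F n)).card + (D.biUnion (fun g => verts g \ VS (F n))).card :=
              Finset.card_union_le _ _
          _ ≤ (VS (F n)).card + ∑ g ∈ D, (verts g \ VS (F n)).card := by
              gcongr; exact Finset.card_biUnion_le
          _ ≤ (VS (F n)).card + ∑ g ∈ D, 1 := by
              gcongr with g hg; exact hnew g hg
          _ = (VS (F n)).card + D.card := by simp
      have hDcard : (F n).card + D.card = (F (n+1)).card := by
        rw [hD, add_comm]
        exact Finset.card_sdiff_add_card_eq_card (hmono n)
      omega
  have hex : ∀ f ∈ E, ∃ m, ReachN r m e₀ f := by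
    intro f hf
    exact reflTransGen_exists_reachN (hconn e₀ he₀ f hf)
  set nn : ℕ := E.attach.sup (fun f => Nat.find (hex f.1 f.2)) with hnn
  have hFE : F nn = E := by
    apply Finset.Subset.antisymm
    · exact Finset.filter_subset _ _
    · intro f hf
      rw [hF, Finset.mem_filter]
      refine ⟨hf, Nat.find (hex f hf), ?_, Nat.find_spec (hex f hf)⟩
      exact Finset.le_sup (f := fun f => Nat.find (hex f.1 f.2))
        (Finset.mem_attach E ⟨f, hf⟩)
  have := key nn
  rwa [hFE] at this

/-- Discrete isoperimetric inequality in `ℤ²`: for a configuration whose open edges form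
a single nonempty finite connected component with `N` open edges, the number of closed
edges sharing a vertex with an open edge satisfies `∂N ≤ 2N + 4`. -/
theorem isoperimetric_Z2 (E : Finset (Sym2 (ℤ × ℤ)))
    (hEdge : ∀ e ∈ E, IsNNEdge2 e)
    (hne : E.Nonempty)
    (hconn : EdgeConnected2 E) :
    {e : Sym2 (ℤ × ℤ) | IsNNEdge2 e ∧ e ∉ E ∧ ∃ f ∈ E, Touches2 e f}.ncard ≤
      2 * E.card + 4 := by
  classical
  set V : Finset (ℤ × ℤ) := VS E with hV
  set A : Finset (Sym2 (ℤ × ℤ)) := V.biUnion incEdges with hA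
  set Bset : Set (Sym2 (ℤ × ℤ)) :=
    {e : Sym2 (ℤ × ℤ) | IsNNEdge2 e ∧ e ∉ E ∧ ∃ f ∈ E, Touches2 e f} with hBset
  have hBA : ∀ e ∈ Bset, e ∈ A := by
    rintro e ⟨hNN, heE, f, hfE, v, hve, hvf⟩
    have hvV : v ∈ V := by
      rw [hV]; simp only [VS, Finset.mem_biUnion]; exact ⟨f, hfE, mem_verts.mpr hvf⟩
    rw [hA, Finset.mem_biUnion]
    exact ⟨v, hvV, mem_incEdges hNN hve⟩
  have hEA : E ⊆ A := by
    intro e heE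
    obtain ⟨x, y, hexy, hd⟩ := hEdge e heE
    have hxe : x ∈ e := by rw [hexy]; exact Sym2.mem_mk_left x y
    have hxV : x ∈ V := by
      rw [hV]; simp only [VS, Finset.mem_biUnion]; exact ⟨e, heE, mem_verts.mpr hxe⟩
    rw [hA, Finset.mem_biUnion]
    exact ⟨x, hxV, mem_incEdges ⟨x, y, hexy, hd⟩ hxe⟩
  set Bfin : Finset (Sym2 (ℤ × ℤ)) := A.filter (fun e => e ∈ Bset) with hBfin
  have hBeq : Bset = ↑Bfin := by
    ext e
    simp only [hBfin, Finset.coe_filter, Set.mem_setOf_eq]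
    exact ⟨fun h => ⟨hBA e h, h⟩, fun h => h.2⟩
  rw [hBeq, Set.ncard_coe_finset]
  have hcount : ∀ e, (V.filter (fun v => e ∈ incEdges v)).card =
      ∑ v ∈ V, (if e ∈ incEdges v then 1 else 0) := by
    intro e
    rw [Finset.card_filter]
  have h1 : ∑ v ∈ V, (incEdges v).card ≤ 4 * V.card := by
    calc ∑ v ∈ V, (incEdges v).card ≤ ∑ _v ∈ V, 4 :=
          Finset.sum_le_sum (fun v _ => card_incEdges_le v)
      _ = 4 * V.card := by rw [Finset.sum_const]; ring
  have h2 : ∀ v ∈ V, (incEdges v).card = ∑ e ∈ A, (if e ∈ incEdges v then 1 else 0) := by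
    intro v hv
    rw [← Finset.card_filter]
    congr 1
    rw [Finset.filter_mem_eq_inter]
    symm
    apply Finset.inter_eq_right.mpr
    intro e he
    rw [hA, Finset.mem_biUnion]
    exact ⟨v, hv, he⟩
  have h3 : ∑ v ∈ V, (incEdges v).card =
      ∑ e ∈ A, (V.filter (fun v => e ∈ incEdges v)).card := by
    rw [Finset.sum_congr rfl h2, Finset.sum_comm]
    exact Finset.sum_congr rfl (fun e _ => (hcount e).symm)
  have hE2 : ∀ e ∈ E, 2 ≤ (V.filter (fun v => e ∈ incEdges v)).card := by
    intro e heE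
    obtain ⟨x, y, hexy, hd⟩ := hEdge e heE
    have hxy : x ≠ y := by
      rintro rfl; simp at hd
    have hmem : ∀ w, w ∈ e → w ∈ V.filter (fun v => e ∈ incEdges v) := by
      intro w hw
      refine Finset.mem_filter.mpr ⟨?_, mem_incEdges ⟨x, y, hexy, hd⟩ hw⟩
      rw [hV]; simp only [VS, Finset.mem_biUnion]; exact ⟨e, heE, mem_verts.mpr hw⟩
    have hx : x ∈ e := by rw [hexy]; exact Sym2.mem_mk_left x y
    have hy : y ∈ e := by rw [hexy]; exact Sym2.mem_mk_right x y
    have hsub : ({x, y} : Finset (ℤ × ℤ)) ⊆ V.filter (fun v => e ∈ incEdges v) := by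
      intro w hw
      rcases Finset.mem_insert.mp hw with h | h
      · exact h ▸ hmem x hx
      · rw [Finset.mem_singleton] at h
        exact h ▸ hmem y hy
    calc 2 = ({x, y} : Finset (ℤ × ℤ)).card := (Finset.card_pair hxy).symm
      _ ≤ _ := Finset.card_le_card hsub
  have hB1 : ∀ e ∈ Bfin, 1 ≤ (V.filter (fun v => e ∈ incEdges v)).card := by
    intro e heB
    rw [hBfin, Finset.mem_filter] at heB
    obtain ⟨-, hNN, -, f, hfE, v, hve, hvf⟩ := heB
    refine Finset.card_pos.mpr ⟨v, Finset.mem_filter.mpr ⟨?_, mem_incEdges hNN hve⟩⟩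
    rw [hV]; simp only [VS, Finset.mem_biUnion]; exact ⟨f, hfE, mem_verts.mpr hvf⟩
  have hdisj : Disjoint E Bfin := by
    rw [Finset.disjoint_left]
    intro e heE heB
    rw [hBfin, Finset.mem_filter] at heB
    exact heB.2.2.1 heE
  have hsubA : E ∪ Bfin ⊆ A := by
    intro e he
    rcases Finset.mem_union.mp he with he | he
    · exact hEA he
    · exact Finset.mem_of_mem_filter e (by rw [hBfin] at he; exact he)
  have h4 : 2 * E.card + Bfin.card ≤
      ∑ e ∈ A, (V.filter (fun v => e ∈ incEdges v)).card := by
    calc 2 * E.card + Bfin.card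
        = ∑ _e ∈ E, 2 + ∑ _e ∈ Bfin, 1 := by
          rw [Finset.sum_const, Finset.sum_const]; simp [mul_comm]
      _ ≤ ∑ e ∈ E, (V.filter (fun v => e ∈ incEdges v)).card
            + ∑ e ∈ Bfin, (V.filter (fun v => e ∈ incEdges v)).card := by
          gcongr with e he e he
          · exact hE2 e he
          · exact hB1 e he
      _ = ∑ e ∈ E ∪ Bfin, (V.filter (fun v => e ∈ incEdges v)).card :=
          (Finset.sum_union hdisj).symm
      _ ≤ ∑ e ∈ A, (V.filter (fun v => e ∈ incEdges v)).card :=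
          Finset.sum_le_sum_of_subset hsubA
  have hVcard : V.card ≤ E.card + 1 := vs_card_le E hne hconn
  omega
end

section
/- For any dimension d ≥ 2 and any finite nonempty connected set of open edges in Z^d with N open edges, the number ∂N of closed edges incident to the open edge set satisfies ∂N ≤ (2d-2)·N + 2d. -/
/-- A nearest-neighbour edge of `ℤ^d`: an unordered pair of vertices at `L¹`-distance 1. -/
def IsNNEdge (d : ℕ) (e : Sym2 (Fin d → ℤ)) : Prop :=
  ∃ x y : Fin d → ℤ, e = s(x, y) ∧ (∑ i, |x i - y i|) = 1

/-- Two edges touch if they share a vertex. -/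
def Touches {d : ℕ} (e f : Sym2 (Fin d → ℤ)) : Prop :=
  ∃ v : Fin d → ℤ, v ∈ e ∧ v ∈ f

/-- A finite set of edges is connected if any two of its edges are linked by a chain of
edges of the set, consecutive ones sharing a vertex. -/
def EdgeConnected {d : ℕ} (E : Finset (Sym2 (Fin d → ℤ))) : Prop :=
  ∀ e ∈ E, ∀ f ∈ E,
    Relation.ReflTransGen (fun a b => a ∈ E ∧ b ∈ E ∧ Touches a b) e f

/- ### Auxiliary material -/

/-- The touching relation restricted to a finite edge set. -/
abbrev ERel {d : ℕ} (E : Finset (Sym2 (Fin d → ℤ))) :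
    Sym2 (Fin d → ℤ) → Sym2 (Fin d → ℤ) → Prop :=
  fun a b => a ∈ E ∧ b ∈ E ∧ Touches a b

/-- Reachability in exactly `n` steps. -/
def reachN {α : Type*} (r : α → α → Prop) (a : α) : ℕ → α → Prop
  | 0, b => b = a
  | n + 1, b => ∃ c, reachN r a n c ∧ r c b

theorem reachN_of_rtg {α : Type*} {r : α → α → Prop} {a b : α}
    (h : Relation.ReflTransGen r a b) : ∃ n, reachN r a n b := by
  induction h with
  | refl => exact ⟨0, rfl⟩
  | tail _ h2 ih => obtain ⟨n, hn⟩ := ih; exact ⟨n + 1, _, hn, h2⟩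

theorem one_coord {d : ℕ} {x y : Fin d → ℤ} (h : (∑ i, |x i - y i|) = 1) :
    ∃ i, |x i - y i| = 1 ∧ ∀ j, j ≠ i → x j = y j := by
  by_cases hx : ∃ i, x i ≠ y i
  · obtain ⟨i, hi⟩ := hx
    have h1 : 1 ≤ |x i - y i| := abs_pos.mpr (sub_ne_zero.mpr hi)
    have hnn : 0 ≤ ∑ j ∈ Finset.univ.erase i, |x j - y j| :=
      Finset.sum_nonneg (fun j _ => abs_nonneg _)
    have hsplit : |x i - y i| + ∑ j ∈ Finset.univ.erase i, |x j - y j| = 1 :=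
      (Finset.add_sum_erase _ _ (Finset.mem_univ i)).trans h
    have hz : ∑ j ∈ Finset.univ.erase i, |x j - y j| = 0 := by omega
    refine ⟨i, by omega, fun j hj => ?_⟩
    have h0 := (Finset.sum_eq_zero_iff_of_nonneg (fun j _ => abs_nonneg _)).mp hz j
      (Finset.mem_erase.mpr ⟨hj, Finset.mem_univ j⟩)
    have := abs_eq_zero.mp h0
    linarith
  · push_neg at hx
    exfalso
    rw [Finset.sum_eq_zero (fun i _ => by rw [hx i, sub_self, abs_zero])] at h
    exact absurd h (by norm_num)

/-- The (at most `2d`) nearest-neighbour edges through a vertex. -/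
def nbrs {d : ℕ} (v : Fin d → ℤ) : Finset (Sym2 (Fin d → ℤ)) :=
  Finset.image (fun p : Fin d × Bool =>
    s(v, Function.update v p.1 (v p.1 + cond p.2 1 (-1)))) Finset.univ

theorem card_nbrs {d : ℕ} (v : Fin d → ℤ) : (nbrs v).card ≤ 2 * d := by
  refine le_trans Finset.card_image_le ?_
  simp [mul_comm]

theorem mem_nbrs_left {d : ℕ} {x y : Fin d → ℤ}
    (hsum : (∑ i, |x i - y i|) = 1) : s(x, y) ∈ nbrs x := by
  obtain ⟨i, hi, hrest⟩ := one_coord hsum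
  rcases (abs_eq (by norm_num : (0:ℤ) ≤ 1)).mp hi with h1 | h1
  · refine Finset.mem_image.mpr ⟨(i, false), Finset.mem_univ _, ?_⟩
    refine congrArg (fun z => s(x, z)) (funext fun j => ?_)
    by_cases hj : j = i
    · subst hj; rw [Function.update_self]; simp only [Bool.cond_false]; omega
    · rw [Function.update_of_ne hj]; exact hrest j hj
  · refine Finset.mem_image.mpr ⟨(i, true), Finset.mem_univ _, ?_⟩
    refine congrArg (fun z => s(x, z)) (funext fun j => ?_)
    by_cases hj : j = i
    · subst hj; rw [Function.update_self]; simp only [Bool.cond_true]; omega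
    · rw [Function.update_of_ne hj]; exact hrest j hj

theorem mem_nbrs {d : ℕ} {v : Fin d → ℤ} {e : Sym2 (Fin d → ℤ)}
    (he : IsNNEdge d e) (hv : v ∈ e) : e ∈ nbrs v := by
  obtain ⟨x, y, rfl, hsum⟩ := he
  rcases Sym2.mem_iff.mp hv with rfl | rfl
  · exact mem_nbrs_left hsum
  · rw [Sym2.eq_swap]
    exact mem_nbrs_left (by simpa [abs_sub_comm] using hsum)

/-- The endpoints of an edge, as a finset. -/
def everts {d : ℕ} : Sym2 (Fin d → ℤ) → Finset (Fin d → ℤ) :=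
  Sym2.lift ⟨fun a b => {a, b}, fun a b => Finset.pair_comm a b⟩

theorem mem_everts {d : ℕ} {v : Fin d → ℤ} {e : Sym2 (Fin d → ℤ)} :
    v ∈ everts e ↔ v ∈ e := by
  induction e using Sym2.ind with
  | _ x y => simp [everts, Sym2.mem_iff]

theorem card_everts {d : ℕ} (e : Sym2 (Fin d → ℤ)) : (everts e).card ≤ 2 := by
  induction e using Sym2.ind with
  | _ x y =>
    simp only [everts, Sym2.lift_mk]
    exact le_trans (Finset.card_insert_le _ _) (by simp)

/-- Discrete isoperimetric inequality in `ℤ^d`: for a finite nonempty connected set of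
open nearest-neighbour edges with `N` edges, the number of closed edges incident to it is
at most `(2d-2)·N + 2d`. -/
theorem isoperimetric_Zd (d : ℕ) (hd : 2 ≤ d)
    (E : Finset (Sym2 (Fin d → ℤ)))
    (hEdge : ∀ e ∈ E, IsNNEdge d e)
    (hne : E.Nonempty)
    (hconn : EdgeConnected E) :
    {e : Sym2 (Fin d → ℤ) | IsNNEdge d e ∧ e ∉ E ∧ ∃ f ∈ E, Touches e f}.ncard ≤
      (2 * d - 2) * E.card + 2 * d := by
  classical
  obtain ⟨e0, he0⟩ := hne
  have hconn' : ∀ e ∈ E, ∀ f ∈ E, Relation.ReflTransGen (ERel E) e f := hconn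
  set V : Finset (Fin d → ℤ) := E.biUnion everts with hV
  have hVmem : ∀ v : Fin d → ℤ, v ∈ V ↔ ∃ e ∈ E, v ∈ e := by
    intro v
    simp only [hV, Finset.mem_biUnion, mem_everts]
  -- Step 1: |V| ≤ |E| + 1
  have hex : ∀ v : Fin d → ℤ, ∃ e n, v ∈ V → e ∈ E ∧ v ∈ e ∧ reachN (ERel E) e0 n e ∧
      ∀ m f, f ∈ E → v ∈ f → reachN (ERel E) e0 m f → n ≤ m := by
    intro v
    by_cases hv : v ∈ V
    · obtain ⟨f, hfE, hvf⟩ := (hVmem v).mp hv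
      have hre : ∃ n, ∃ e, e ∈ E ∧ v ∈ e ∧ reachN (ERel E) e0 n e := by
        obtain ⟨n, hn⟩ := reachN_of_rtg (hconn' e0 he0 f hfE)
        exact ⟨n, f, hfE, hvf, hn⟩
      obtain ⟨e, heE, hve, hreach⟩ := Nat.find_spec hre
      exact ⟨e, Nat.find hre, fun _ => ⟨heE, hve, hreach,
        fun m f hf hvf' hr' => Nat.find_min' hre ⟨f, hf, hvf', hr'⟩⟩⟩
    · exact ⟨e0, 0, fun h => absurd h hv⟩
  choose F nF hF using hex
  have hcardV : V.card ≤ E.card + 1 := by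
    have hmap : ∀ v ∈ V, F v ∈ E := fun v hv => (hF v hv).1
    rw [Finset.card_eq_sum_card_fiberwise hmap]
    have hbound : ∀ e ∈ E,
        (V.filter (fun v => F v = e)).card ≤ if e = e0 then 2 else 1 := by
      intro e heE
      by_cases he : e = e0
      · rw [if_pos he]
        have hsubf : V.filter (fun v => F v = e) ⊆ everts e := by
          intro v hv
          obtain ⟨hvV, hFv⟩ := Finset.mem_filter.mp hv
          rw [mem_everts]
          have := (hF v hvV).2.1
          rwa [hFv] at this
        exact le_trans (Finset.card_le_card hsubf) (card_everts e)
      · rw [if_neg he]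
        obtain ⟨x, y, hxy, hsumE⟩ := hEdge e heE
        refine Finset.card_le_one.mpr ?_
        intro v hv w hw
        by_contra hvw
        obtain ⟨hvV, hFv⟩ := Finset.mem_filter.mp hv
        obtain ⟨hwV, hFw⟩ := Finset.mem_filter.mp hw
        obtain ⟨-, hvFv, -, hminv⟩ := hF v hvV
        obtain ⟨-, hwFw, -, hminw⟩ := hF w hwV
        rw [hFv] at hvFv
        rw [hFw] at hwFw
        have key : ∀ u, u ∈ V → F u = e →
            (nF v ≤ nF u - 1 ∧ 1 ≤ nF u) ∨ (nF w ≤ nF u - 1 ∧ 1 ≤ nF u) := by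
          intro u huV hFu
          obtain ⟨-, -, hreachu, -⟩ := hF u huV
          rw [hFu] at hreachu
          cases hn : nF u with
          | zero =>
            rw [hn] at hreachu
            exact absurd hreachu he
          | succ m =>
            rw [hn] at hreachu
            obtain ⟨c, hcm, hrc⟩ := hreachu
            obtain ⟨hcE, heE', u', hu'c, hu'e⟩ := hrc
            have hu' : u' = v ∨ u' = w := by
              rw [hxy] at hu'e hvFv hwFw
              rcases Sym2.mem_iff.mp hvFv with rfl | rfl <;>
                rcases Sym2.mem_iff.mp hwFw with rfl | rfl <;>
                  rcases Sym2.mem_iff.mp hu'e with rfl | rfl <;>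
                    first
                      | exact Or.inl rfl
                      | exact Or.inr rfl
                      | exact absurd rfl hvw
            rcases hu' with rfl | rfl
            · exact Or.inl ⟨by have := hminv m c hcE hu'c hcm; omega, by omega⟩
            · exact Or.inr ⟨by have := hminw m c hcE hu'c hcm; omega, by omega⟩
        have kv := key v hvV hFv
        have kw := key w hwV hFw
        omega
    calc ∑ e ∈ E, (V.filter (fun v => F v = e)).card
        ≤ ∑ e ∈ E, (if e = e0 then 2 else 1) := Finset.sum_le_sum hbound
      _ = E.card + 1 := by
          rw [Finset.sum_congr rfl
            (fun e _ => (by split <;> rfl : (if e = e0 then 2 else 1)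
              = 1 + (if e = e0 then 1 else 0))),
            Finset.sum_add_distrib, Finset.sum_const, Finset.sum_ite_eq' E e0 (fun _ => 1)]
          simp [he0]
  -- Step 2: boundary count
  set Bf : Finset (Sym2 (Fin d → ℤ)) := V.biUnion (fun v => nbrs v \ E) with hBf
  have hsub : {e : Sym2 (Fin d → ℤ) | IsNNEdge d e ∧ e ∉ E ∧ ∃ f ∈ E, Touches e f}
      ⊆ ↑Bf := by
    rintro e ⟨hnn, heE, f, hfE, u, hue, huf⟩
    rw [Finset.mem_coe, hBf, Finset.mem_biUnion]
    exact ⟨u, (hVmem u).mpr ⟨f, hfE, huf⟩,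
      Finset.mem_sdiff.mpr ⟨mem_nbrs hnn hue, heE⟩⟩
  have hB : {e : Sym2 (Fin d → ℤ) | IsNNEdge d e ∧ e ∉ E ∧ ∃ f ∈ E, Touches e f}.ncard
      ≤ Bf.card := by
    rw [← Set.ncard_coe_finset]
    exact Set.ncard_le_ncard hsub Bf.finite_toSet
  have h1 : Bf.card ≤ ∑ v ∈ V, (nbrs v \ E).card := Finset.card_biUnion_le
  have h2 : 2 * E.card ≤ ∑ v ∈ V, (nbrs v ∩ E).card := by
    have e1 : ∑ v ∈ V, (nbrs v ∩ E).card
        = ∑ e ∈ E, (V.filter fun v => e ∈ nbrs v).card := by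
      rw [Finset.sum_congr rfl (fun v _ => by
        rw [Finset.inter_comm, ← Finset.filter_mem_eq_inter, Finset.card_filter]),
        Finset.sum_comm]
      exact Finset.sum_congr rfl fun e _ => (Finset.card_filter _ _).symm
    rw [e1]
    have hlow : ∀ e ∈ E, 2 ≤ (V.filter fun v => e ∈ nbrs v).card := by
      intro e heE
      obtain ⟨x, y, hxy, hsum⟩ := hEdge e heE
      obtain ⟨i, hi, -⟩ := one_coord hsum
      have hxyne : x ≠ y := fun h => by simp [h] at hi
      have hsubxy : ({x, y} : Finset (Fin d → ℤ)) ⊆ V.filter fun v => e ∈ nbrs v := by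
        intro u hu
        have hux : u = x ∨ u = y := by
          rcases Finset.mem_insert.mp hu with h | h
          · exact Or.inl h
          · exact Or.inr (Finset.mem_singleton.mp h)
        have hue : u ∈ e := by
          rw [hxy]
          rcases hux with rfl | rfl
          · exact Sym2.mem_iff.mpr (Or.inl rfl)
          · exact Sym2.mem_iff.mpr (Or.inr rfl)
        exact Finset.mem_filter.mpr ⟨(hVmem u).mpr ⟨e, heE, hue⟩,
          mem_nbrs ⟨x, y, hxy, hsum⟩ hue⟩
      calc 2 = ({x, y} : Finset (Fin d → ℤ)).card := (Finset.card_pair hxyne).symm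
        _ ≤ _ := Finset.card_le_card hsubxy
    calc 2 * E.card = ∑ _e ∈ E, 2 := by rw [Finset.sum_const, smul_eq_mul, mul_comm]
      _ ≤ _ := Finset.sum_le_sum hlow
  have hcount : Bf.card + 2 * E.card ≤ 2 * d * V.card := by
    calc Bf.card + 2 * E.card
        ≤ (∑ v ∈ V, (nbrs v \ E).card) + ∑ v ∈ V, (nbrs v ∩ E).card := add_le_add h1 h2
      _ = ∑ v ∈ V, ((nbrs v \ E).card + (nbrs v ∩ E).card) := Finset.sum_add_distrib.symm
      _ = ∑ v ∈ V, (nbrs v).card :=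
          Finset.sum_congr rfl (fun v _ => Finset.card_sdiff_add_card_inter _ _)
      _ ≤ ∑ _v ∈ V, 2 * d := Finset.sum_le_sum (fun v _ => card_nbrs v)
      _ = V.card * (2 * d) := by rw [Finset.sum_const, smul_eq_mul]
      _ = 2 * d * V.card := mul_comm _ _
  -- Step 3: arithmetic
  obtain ⟨k, rfl⟩ : ∃ k, d = k + 2 := ⟨d - 2, by omega⟩
  have h5 : Bf.card + 2 * E.card ≤ 2 * (k + 2) * (E.card + 1) :=
    le_trans hcount (Nat.mul_le_mul_left _ hcardV)
  have h6 : 2 * (k + 2) - 2 = 2 * k + 2 := by omega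
  rw [h6]
  have h7 : (2 * k + 2) * E.card + 2 * (k + 2) + 2 * E.card
      = 2 * (k + 2) * (E.card + 1) := by ring
  refine le_trans hB ?_
  linarith [h5, h7]
end
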